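/- arXiv:0905.1789 — 3 statements merged into one kernel-verified Lean document; each statement's English description precedes it below -/
import Mathlib

section
/- Let L = FreeLieAlgebra ℝ (Fin n) with generators x₁,…,x_n. Suppose D and E are Lie algebra derivations of L such that there exist elements a₁,…,a_n, b₁,…,b_n ∈ L with D(x_k) = ⁅a_k, x_k⁆ and E(x_k) = ⁅b_k, x_k⁆ for all k, and D(x₁ + ⋯ + x_n) = E(x₁ + ⋯ + x_n) = 0. Then the commutator derivation ⁅D, E⁆ = D∘E − E∘D satisfies ⁅D,E⁆(x_k) = ⁅c_k, x_k⁆ with c_k = D(b_k) − E(a_k) − ⁅a_k, b_k⁆, and ⁅D,E⁆(x₁ + ⋯ + x_n) = 0. Consequently the set of such 'special' derivations is a Lie subalgebra of the Lie algebra of derivations of L. -/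
lemma key_lemma {n : ℕ}
    (F G : LieDerivation ℝ (FreeLieAlgebra ℝ (Fin n)) (FreeLieAlgebra ℝ (Fin n)))
    (x c d : FreeLieAlgebra ℝ (Fin n))
    (hF : F x = ⁅c, x⁆) (hG : G x = ⁅d, x⁆) :
    ⁅F, G⁆ x = ⁅F d - G c - ⁅c, d⁆, x⁆ := by
  rw [LieDerivation.commutator_apply, hF, hG,
    LieDerivation.apply_lie_eq_add, LieDerivation.apply_lie_eq_add, hF, hG]
  simp only [sub_lie, lie_lie]
  abel

noncomputable def sderSub (n : ℕ) : LieSubalgebra ℝ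
    (LieDerivation ℝ (FreeLieAlgebra ℝ (Fin n)) (FreeLieAlgebra ℝ (Fin n))) where
  carrier := {F | (∃ c : Fin n → FreeLieAlgebra ℝ (Fin n),
      ∀ k : Fin n, F (FreeLieAlgebra.of ℝ k) = ⁅c k, FreeLieAlgebra.of ℝ k⁆) ∧
      F (∑ k : Fin n, FreeLieAlgebra.of ℝ k) = 0}
  add_mem' := by
    rintro F G ⟨⟨c, hc⟩, hF0⟩ ⟨⟨d, hd⟩, hG0⟩
    exact ⟨⟨c + d, fun k => by
      simp [LieDerivation.add_apply, hc k, hd k, add_lie]⟩,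
      by rw [LieDerivation.add_apply, hF0, hG0, add_zero]⟩
  zero_mem' := ⟨⟨0, fun k => by simp⟩, by simp⟩
  smul_mem' := by
    rintro r F ⟨⟨c, hc⟩, hF0⟩
    exact ⟨⟨r • c, fun k => by
      simp [LieDerivation.smul_apply, hc k, smul_lie]⟩,
      by rw [LieDerivation.smul_apply, hF0, smul_zero]⟩
  lie_mem' := by
    rintro F G ⟨⟨c, hc⟩, hF0⟩ ⟨⟨d, hd⟩, hG0⟩
    refine ⟨⟨fun k => F (d k) - G (c k) - ⁅c k, d k⁆,
      fun k => key_lemma F G _ _ _ (hc k) (hd k)⟩, ?_⟩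
    rw [LieDerivation.commutator_apply, hF0, hG0, map_zero, map_zero, sub_zero]

/-- The commutator of two special derivations of the free Lie algebra is again a
special derivation, with the explicit tangential element
`c_k = D(b_k) − E(a_k) − ⁅a_k, b_k⁆`; consequently the special derivations form a
Lie subalgebra of the Lie algebra of derivations. -/
theorem stmt_3 (n : ℕ)
    (D E : LieDerivation ℝ (FreeLieAlgebra ℝ (Fin n)) (FreeLieAlgebra ℝ (Fin n)))
    (a b : Fin n → FreeLieAlgebra ℝ (Fin n))
    (hD : ∀ k : Fin n, D (FreeLieAlgebra.of ℝ k) = ⁅a k, FreeLieAlgebra.of ℝ k⁆)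
    (hE : ∀ k : Fin n, E (FreeLieAlgebra.of ℝ k) = ⁅b k, FreeLieAlgebra.of ℝ k⁆)
    (hD0 : D (∑ k : Fin n, FreeLieAlgebra.of ℝ k) = 0)
    (hE0 : E (∑ k : Fin n, FreeLieAlgebra.of ℝ k) = 0) :
    (∀ k : Fin n,
        ⁅D, E⁆ (FreeLieAlgebra.of ℝ k)
          = ⁅D (b k) - E (a k) - ⁅a k, b k⁆, FreeLieAlgebra.of ℝ k⁆) ∧
    ⁅D, E⁆ (∑ k : Fin n, FreeLieAlgebra.of ℝ k) = 0 ∧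
    ∃ S : LieSubalgebra ℝ
        (LieDerivation ℝ (FreeLieAlgebra ℝ (Fin n)) (FreeLieAlgebra ℝ (Fin n))),
      ∀ F : LieDerivation ℝ (FreeLieAlgebra ℝ (Fin n)) (FreeLieAlgebra ℝ (Fin n)),
        F ∈ S ↔
          (∃ c : Fin n → FreeLieAlgebra ℝ (Fin n),
              ∀ k : Fin n, F (FreeLieAlgebra.of ℝ k) = ⁅c k, FreeLieAlgebra.of ℝ k⁆) ∧
            F (∑ k : Fin n, FreeLieAlgebra.of ℝ k) = 0 := by
  refine ⟨fun k => key_lemma D E _ _ _ (hD k) (hE k), ?_, ⟨sderSub n, fun F => Iff.rfl⟩⟩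
  rw [LieDerivation.commutator_apply, hD0, hE0, map_zero, map_zero, sub_zero]
end

section
/- Let L = FreeLieAlgebra ℝ (Fin n) with generators x₁,…,x_n. For distinct indices a, b let D_{ab} be the unique derivation of L with D_{ab}(x_a) = ⁅x_b, x_a⁆, D_{ab}(x_b) = ⁅x_a, x_b⁆, and D_{ab}(x_c) = 0 for c ∉ {a,b}. Then: (i) D_{ab} = D_{ba}; (ii) D_{ab}(x₁ + ⋯ + x_n) = 0, so each D_{ab} is a special derivation; (iii) ⁅D_{ab}, D_{cd}⁆ = 0 whenever a, b, c, d are pairwise distinct; and (iv) ⁅D_{ab}, D_{ac} + D_{bc}⁆ = 0 whenever a, b, c are pairwise distinct. That is, the tangential derivations D_{ab} satisfy the infinitesimal braid relations defining the Drinfeld–Kohno Lie algebra t_n. -/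
lemma free_lieSpan_top (R X : Type*) [CommRing R] :
    LieSubalgebra.lieSpan R (FreeLieAlgebra R X) (Set.range (FreeLieAlgebra.of R)) = ⊤ := by
  set S := LieSubalgebra.lieSpan R (FreeLieAlgebra R X) (Set.range (FreeLieAlgebra.of R))
  rw [eq_top_iff]
  intro x _
  let g : FreeLieAlgebra R X →ₗ⁅R⁆ S :=
    FreeLieAlgebra.lift R (fun i => ⟨FreeLieAlgebra.of R i,
      LieSubalgebra.subset_lieSpan ⟨i, rfl⟩⟩)
  have h : S.incl.comp g = LieHom.id := by
    apply FreeLieAlgebra.hom_ext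
    intro i
    simp [g, FreeLieAlgebra.lift_of_apply]
  have : S.incl (g x) = x := by
    have := congrArg (fun F => F x) h
    simpa using this
  rw [← this]
  exact (g x).2

lemma lieDer_ext {R X : Type*} [CommRing R]
    {D1 D2 : LieDerivation R (FreeLieAlgebra R X) (FreeLieAlgebra R X)}
    (h : ∀ i, D1 (FreeLieAlgebra.of R i) = D2 (FreeLieAlgebra.of R i)) : D1 = D2 := by
  apply LieDerivation.ext_of_lieSpan_eq_top _ (free_lieSpan_top R X)
  rintro _ ⟨i, rfl⟩
  exact h i

/-- The tangential derivations `D_ab` of the free Lie algebra (determined by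
`D_ab x_a = ⁅x_b, x_a⁆`, `D_ab x_b = ⁅x_a, x_b⁆`, `D_ab x_c = 0` otherwise) are
special derivations satisfying the infinitesimal braid relations of the
Drinfeld–Kohno Lie algebra `t_n`. -/
theorem stmt_4 (n : ℕ)
    (D : Fin n → Fin n → LieDerivation ℝ (FreeLieAlgebra ℝ (Fin n)) (FreeLieAlgebra ℝ (Fin n)))
    (hDa : ∀ a b : Fin n, a ≠ b →
      D a b (FreeLieAlgebra.of ℝ a) = ⁅FreeLieAlgebra.of ℝ b, FreeLieAlgebra.of ℝ a⁆)
    (hDb : ∀ a b : Fin n, a ≠ b →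
      D a b (FreeLieAlgebra.of ℝ b) = ⁅FreeLieAlgebra.of ℝ a, FreeLieAlgebra.of ℝ b⁆)
    (hDc : ∀ a b c : Fin n, a ≠ b → c ≠ a → c ≠ b → D a b (FreeLieAlgebra.of ℝ c) = 0) :
    (∀ a b : Fin n, a ≠ b → D a b = D b a) ∧
    (∀ a b : Fin n, a ≠ b → D a b (∑ k : Fin n, FreeLieAlgebra.of ℝ k) = 0) ∧
    (∀ a b c d : Fin n, a ≠ b → a ≠ c → a ≠ d → b ≠ c → b ≠ d → c ≠ d →
      ⁅D a b, D c d⁆ = 0) ∧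
    (∀ a b c : Fin n, a ≠ b → a ≠ c → b ≠ c →
      ⁅D a b, D a c + D b c⁆ = 0) := by
  have key : ∀ a b k : Fin n, a ≠ b → D a b (FreeLieAlgebra.of ℝ k) =
      (if k = a then ⁅FreeLieAlgebra.of ℝ b, FreeLieAlgebra.of ℝ a⁆ else 0) +
      (if k = b then ⁅FreeLieAlgebra.of ℝ a, FreeLieAlgebra.of ℝ b⁆ else 0) := by
    intro a b k hab
    by_cases hka : k = a
    · subst hka
      rw [if_pos rfl, if_neg hab, add_zero, hDa _ _ hab]
    · by_cases hkb : k = b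
      · subst hkb
        rw [if_neg hka, if_pos rfl, zero_add, hDb _ _ hab]
      · rw [if_neg hka, if_neg hkb, add_zero, hDc _ _ _ hab hka hkb]
  refine ⟨?_, ?_, ?_, ?_⟩
  · intro a b hab
    apply lieDer_ext
    intro k
    rw [key a b k hab, key b a k hab.symm]
    exact add_comm _ _
  · intro a b hab
    rw [map_sum]
    rw [Finset.sum_congr rfl (fun k _ => key a b k hab), Finset.sum_add_distrib,
      Finset.sum_ite_eq' Finset.univ a, Finset.sum_ite_eq' Finset.univ b]
    rw [if_pos (Finset.mem_univ a), if_pos (Finset.mem_univ b),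
      ← lie_skew (FreeLieAlgebra.of ℝ b) (FreeLieAlgebra.of ℝ a)]
    abel
  · intro a b c d hab hac had hbc hbd hcd
    have vab_a := hDa a b hab
    have vab_b := hDb a b hab
    have vab_c : D a b (FreeLieAlgebra.of ℝ c) = 0 := hDc a b c hab hac.symm hbc.symm
    have vab_d : D a b (FreeLieAlgebra.of ℝ d) = 0 := hDc a b d hab had.symm hbd.symm
    have vcd_c := hDa c d hcd
    have vcd_d := hDb c d hcd
    have vcd_a : D c d (FreeLieAlgebra.of ℝ a) = 0 := hDc c d a hcd hac had
    have vcd_b : D c d (FreeLieAlgebra.of ℝ b) = 0 := hDc c d b hcd hbc hbd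
    apply lieDer_ext
    intro k
    by_cases hka : k = a
    · subst hka
      simp [LieDerivation.commutator_apply, LieDerivation.apply_lie_eq_add,
        vab_a, vab_b, vab_c, vab_d, vcd_a, vcd_b, vcd_c, vcd_d]
    · by_cases hkb : k = b
      · subst hkb
        simp [LieDerivation.commutator_apply, LieDerivation.apply_lie_eq_add,
          vab_a, vab_b, vab_c, vab_d, vcd_a, vcd_b, vcd_c, vcd_d]
      · by_cases hkc : k = c
        · subst hkc
          simp [LieDerivation.commutator_apply, LieDerivation.apply_lie_eq_add,
            vab_a, vab_b, vab_c, vab_d, vcd_a, vcd_b, vcd_c, vcd_d]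
        · by_cases hkd : k = d
          · subst hkd
            simp [LieDerivation.commutator_apply, LieDerivation.apply_lie_eq_add,
              vab_a, vab_b, vab_c, vab_d, vcd_a, vcd_b, vcd_c, vcd_d]
          · have h1 : D a b (FreeLieAlgebra.of ℝ k) = 0 := hDc a b k hab hka hkb
            have h2 : D c d (FreeLieAlgebra.of ℝ k) = 0 := hDc c d k hcd hkc hkd
            simp [LieDerivation.commutator_apply, h1, h2]
  · intro a b c hab hac hbc
    have vab_a := hDa a b hab
    have vab_b := hDb a b hab
    have vab_c : D a b (FreeLieAlgebra.of ℝ c) = 0 := hDc a b c hab hac.symm hbc.symm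
    have vac_a := hDa a c hac
    have vac_c := hDb a c hac
    have vac_b : D a c (FreeLieAlgebra.of ℝ b) = 0 := hDc a c b hac hab.symm hbc
    have vbc_b := hDa b c hbc
    have vbc_c := hDb b c hbc
    have vbc_a : D b c (FreeLieAlgebra.of ℝ a) = 0 := hDc b c a hbc hab hac
    apply lieDer_ext
    intro k
    by_cases hka : k = a
    · subst hka
      simp only [LieDerivation.commutator_apply, LieDerivation.add_apply,
        LieDerivation.apply_lie_eq_add, LieDerivation.zero_apply, map_add,
        vab_a, vab_b, vab_c, vac_a, vac_b, vac_c, vbc_a, vbc_b, vbc_c,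
        map_zero, zero_lie, lie_zero, add_zero, zero_add, lie_lie]
      abel
    · by_cases hkb : k = b
      · subst hkb
        simp only [LieDerivation.commutator_apply, LieDerivation.add_apply,
          LieDerivation.apply_lie_eq_add, LieDerivation.zero_apply, map_add,
          vab_a, vab_b, vab_c, vac_a, vac_b, vac_c, vbc_a, vbc_b, vbc_c,
          map_zero, zero_lie, lie_zero, add_zero, zero_add, lie_lie]
        abel
      · by_cases hkc : k = c
        · subst hkc
          simp only [LieDerivation.commutator_apply, LieDerivation.add_apply,
            LieDerivation.apply_lie_eq_add, LieDerivation.zero_apply, map_add,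
            vab_a, vab_b, vab_c, vac_a, vac_b, vac_c, vbc_a, vbc_b, vbc_c,
            map_zero, zero_lie, lie_zero, add_zero, zero_add, lie_lie]
          abel
        · have h1 : D a b (FreeLieAlgebra.of ℝ k) = 0 := hDc a b k hab hka hkb
          have h2 : D a c (FreeLieAlgebra.of ℝ k) = 0 := hDc a c k hac hka hkc
          have h3 : D b c (FreeLieAlgebra.of ℝ k) = 0 := hDc b c k hbc hkb hkc
          simp [LieDerivation.commutator_apply, h1, h2, h3]
end

section
/- Let t_n be the quotient of the free Lie algebra over ℝ on generators t_{ab} (indexed by unordered pairs {a,b} of distinct elements of Fin n) by the Lie ideal generated by all elements ⁅t_{ab}, t_{cd}⁆ with a, b, c, d pairwise distinct and ⁅t_{ab}, t_{ac} + t_{bc}⁆ with a, b, c pairwise distinct. Let L = FreeLieAlgebra ℝ (Fin n) and for distinct a, b let D_{ab} be the unique derivation of L with D_{ab}(x_a) = ⁅x_b, x_a⁆, D_{ab}(x_b) = ⁅x_a, x_b⁆, D_{ab}(x_c) = 0 otherwise. Then there exists a Lie algebra homomorphism φ : t_n → LieDerivation ℝ L L such that φ sends the class of the generator t_{ab} to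 D_{ab} for every unordered pair {a,b}. -/
open FreeLieAlgebra

/-- The index type of the generators `t_ab` of the Drinfeld–Kohno Lie algebra:
unordered pairs of distinct elements of `Fin n`. -/
def DKPairs (n : ℕ) : Type := { p : Sym2 (Fin n) // ¬ p.IsDiag }

/-- The generator `t_ab` in the free Lie algebra, for `a ≠ b`. -/
noncomputable def dkGen {n : ℕ} (a b : Fin n) (h : a ≠ b) : FreeLieAlgebra ℝ (DKPairs n) :=
  FreeLieAlgebra.of ℝ (⟨s(a, b), by simpa using h⟩ : DKPairs n)

/-- The Lie ideal of infinitesimal braid relations. -/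
noncomputable def dkIdeal (n : ℕ) : LieIdeal ℝ (FreeLieAlgebra ℝ (DKPairs n)) :=
  LieSubmodule.lieSpan ℝ (FreeLieAlgebra ℝ (DKPairs n))
    ({ x | ∃ (a b c d : Fin n) (hab : a ≠ b) (hcd : c ≠ d),
        a ≠ c ∧ a ≠ d ∧ b ≠ c ∧ b ≠ d ∧
        x = ⁅dkGen a b hab, dkGen c d hcd⁆ } ∪
     { x | ∃ (a b c : Fin n) (hab : a ≠ b) (hac : a ≠ c) (hbc : b ≠ c),
        x = ⁅dkGen a b hab, dkGen a c hac + dkGen b c hbc⁆ })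

/-- The Drinfeld–Kohno Lie algebra `t_n`. -/
def DKLie (n : ℕ) : Type := FreeLieAlgebra ℝ (DKPairs n) ⧸ dkIdeal n

noncomputable instance (n : ℕ) : LieRing (DKLie n) :=
  inferInstanceAs (LieRing (FreeLieAlgebra ℝ (DKPairs n) ⧸ dkIdeal n))

noncomputable instance (n : ℕ) : LieAlgebra ℝ (DKLie n) :=
  inferInstanceAs (LieAlgebra ℝ (FreeLieAlgebra ℝ (DKPairs n) ⧸ dkIdeal n))

/-- The class of the generator `t_ab` in `t_n`. -/
noncomputable def dkT {n : ℕ} (a b : Fin n) (h : a ≠ b) : DKLie n :=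
  LieSubmodule.Quotient.mk (N := dkIdeal n) (dkGen a b h)

section Aux

open FreeLieAlgebra

/-- The free Lie algebra is generated, as a Lie algebra, by the range of `of`. -/
lemma freeLie_lieSpan_top (n : ℕ) :
    LieSubalgebra.lieSpan ℝ (FreeLieAlgebra ℝ (Fin n))
      (Set.range (FreeLieAlgebra.of ℝ)) = ⊤ := by
  set S := LieSubalgebra.lieSpan ℝ (FreeLieAlgebra ℝ (Fin n))
    (Set.range (FreeLieAlgebra.of ℝ)) with hS
  rw [eq_top_iff]
  intro x _
  let g : FreeLieAlgebra ℝ (Fin n) →ₗ⁅ℝ⁆ S :=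
    FreeLieAlgebra.lift ℝ fun i =>
      (⟨FreeLieAlgebra.of ℝ i, LieSubalgebra.subset_lieSpan ⟨i, rfl⟩⟩ : S)
  have key : S.incl.comp g = LieHom.id := by
    apply FreeLieAlgebra.hom_ext
    intro i
    simp [g, LieSubalgebra.coe_incl]
  have : S.incl (g x) = x := by
    have := congrArg (fun F : FreeLieAlgebra ℝ (Fin n) →ₗ⁅ℝ⁆ FreeLieAlgebra ℝ (Fin n) => F x) key
    simpa using this
  rw [← this]
  exact (g x).2

/-- Two derivations of the free Lie algebra agreeing on generators are equal. -/
lemma freeLie_der_ext {n : ℕ}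
    {D1 D2 : LieDerivation ℝ (FreeLieAlgebra ℝ (Fin n)) (FreeLieAlgebra ℝ (Fin n))}
    (h : ∀ i, D1 (FreeLieAlgebra.of ℝ i) = D2 (FreeLieAlgebra.of ℝ i)) : D1 = D2 :=
  LieDerivation.ext_of_lieSpan_eq_top _ (freeLie_lieSpan_top n)
    (by rintro x ⟨i, rfl⟩; exact h i)

end Aux

/-- There is a Lie algebra homomorphism `φ : t_n → Der(L)` sending each generator
`t_ab` to the tangential derivation `D_ab` of the free Lie algebra
`L = FreeLieAlgebra ℝ (Fin n)`. -/
theorem stmt_5 (n : ℕ)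
    (D : Fin n → Fin n → LieDerivation ℝ (FreeLieAlgebra ℝ (Fin n)) (FreeLieAlgebra ℝ (Fin n)))
    (hDa : ∀ a b : Fin n, a ≠ b →
      D a b (FreeLieAlgebra.of ℝ a) = ⁅FreeLieAlgebra.of ℝ b, FreeLieAlgebra.of ℝ a⁆)
    (hDb : ∀ a b : Fin n, a ≠ b →
      D a b (FreeLieAlgebra.of ℝ b) = ⁅FreeLieAlgebra.of ℝ a, FreeLieAlgebra.of ℝ b⁆)
    (hDc : ∀ a b c : Fin n, a ≠ b → c ≠ a → c ≠ b → D a b (FreeLieAlgebra.of ℝ c) = 0) :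
    ∃ φ : DKLie n →ₗ⁅ℝ⁆
        LieDerivation ℝ (FreeLieAlgebra ℝ (Fin n)) (FreeLieAlgebra ℝ (Fin n)),
      ∀ (a b : Fin n) (hab : a ≠ b), φ (dkT a b hab) = D a b := by
  classical
  -- Symmetry of D in its two arguments
  have hsymm : ∀ a b : Fin n, a ≠ b → D a b = D b a := by
    intro a b hab
    apply freeLie_der_ext
    intro i
    by_cases hia : i = a
    · subst hia; rw [hDa i b hab, hDb b i hab.symm]
    · by_cases hib : i = b
      · subst hib; rw [hDb a i hab, hDa i a hab.symm]
      · rw [hDc a b i hab hia hib, hDc b a i hab.symm hib hia]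
  -- First infinitesimal braid relation
  have rel1 : ∀ a b c d : Fin n, a ≠ b → c ≠ d → a ≠ c → a ≠ d → b ≠ c → b ≠ d →
      ⁅D a b, D c d⁆ = (0 : LieDerivation ℝ (FreeLieAlgebra ℝ (Fin n))
        (FreeLieAlgebra ℝ (Fin n))) := by
    intro a b c d hab hcd hac had hbc hbd
    apply freeLie_der_ext
    intro e
    rw [LieDerivation.commutator_apply]
    by_cases hea : e = a
    · subst hea
      rw [hDc c d e hcd hac had, hDa e b hab, map_zero, zero_sub,
        LieDerivation.apply_lie_eq_add, hDc c d b hcd hbc hbd,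
        hDc c d e hcd hac had]
      simp
    by_cases heb : e = b
    · subst heb
      rw [hDc c d e hcd hbc hbd, hDb a e hab, map_zero, zero_sub,
        LieDerivation.apply_lie_eq_add, hDc c d a hcd hac had,
        hDc c d e hcd hbc hbd]
      simp
    by_cases hec : e = c
    · subst hec
      rw [hDc a b e hab hac.symm hbc.symm, hDa e d hcd, map_zero, sub_zero,
        LieDerivation.apply_lie_eq_add, hDc a b d hab had.symm hbd.symm,
        hDc a b e hab hac.symm hbc.symm]
      simp
    by_cases hed : e = d
    · subst hed
      rw [hDc a b e hab had.symm hbd.symm, hDb c e hcd, map_zero, sub_zero,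
        LieDerivation.apply_lie_eq_add, hDc a b c hab hac.symm hbc.symm,
        hDc a b e hab had.symm hbd.symm]
      simp
    · rw [hDc a b e hab hea heb, hDc c d e hcd hec hed]
      simp
  -- Second infinitesimal braid relation
  have rel2 : ∀ a b c : Fin n, a ≠ b → a ≠ c → b ≠ c →
      ⁅D a b, D a c + D b c⁆ = (0 : LieDerivation ℝ (FreeLieAlgebra ℝ (Fin n))
        (FreeLieAlgebra ℝ (Fin n))) := by
    intro a b c hab hac hbc
    apply freeLie_der_ext
    intro e
    rw [LieDerivation.commutator_apply]
    simp only [LieDerivation.coe_add, Pi.add_apply, LieDerivation.coe_zero, Pi.zero_apply]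
    by_cases hea : e = a
    · subst hea
      rw [hDa e c hac, hDc b c e hbc hab hac, hDa e b hab, add_zero,
        LieDerivation.apply_lie_eq_add, LieDerivation.apply_lie_eq_add,
        LieDerivation.apply_lie_eq_add,
        hDc e b c hab hac.symm hbc.symm, hDa e b hab,
        hDc e c b hac hab.symm hbc, hDa e c hac,
        hDa b c hbc, hDc b c e hbc hab hac,
        leibniz_lie (FreeLieAlgebra.of ℝ c) (FreeLieAlgebra.of ℝ b) (FreeLieAlgebra.of ℝ e)]
      simp only [zero_lie, lie_zero, zero_add, add_zero]
      abel
    by_cases heb : e = b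
    · subst heb
      rw [hDc a c e hac hab.symm hbc, hDa e c hbc, hDb a e hab, zero_add,
        LieDerivation.apply_lie_eq_add, LieDerivation.apply_lie_eq_add,
        LieDerivation.apply_lie_eq_add,
        hDc a e c hab hac.symm hbc.symm, hDb a e hab,
        hDa a c hac, hDc a c e hac hab.symm hbc,
        hDa e c hbc, hDc e c a hbc hab hac,
        leibniz_lie (FreeLieAlgebra.of ℝ c) (FreeLieAlgebra.of ℝ a) (FreeLieAlgebra.of ℝ e)]
      simp only [zero_lie, lie_zero, zero_add, add_zero]
      abel
    by_cases hec : e = c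
    · subst hec
      rw [hDc a b e hab hac.symm hbc.symm, map_zero, map_zero, add_zero, sub_zero,
        hDb a e hac, hDb b e hbc, map_add,
        LieDerivation.apply_lie_eq_add, LieDerivation.apply_lie_eq_add,
        hDa a b hab, hDb a b hab,
        hDc a b e hab hac.symm hbc.symm]
      simp only [lie_zero, zero_add, add_zero, zero_lie]
      rw [← lie_skew (FreeLieAlgebra.of ℝ b) (FreeLieAlgebra.of ℝ a), neg_lie]
      simp
    · rw [hDc a b e hab hea heb, hDc a c e hac hea hec, hDc b c e hbc heb hec]
      simp
  -- the map on generators, well-defined on unordered pairs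
  let f' : Fin n → Fin n → LieDerivation ℝ (FreeLieAlgebra ℝ (Fin n))
      (FreeLieAlgebra ℝ (Fin n)) := fun a b => if h : a = b then 0 else D a b
  have hf'symm : ∀ a b, f' a b = f' b a := by
    intro a b
    by_cases h : a = b
    · simp [f', h]
    · simp only [f', dif_neg h, dif_neg (Ne.symm h)]
      exact hsymm a b h
  let F : DKPairs n → LieDerivation ℝ (FreeLieAlgebra ℝ (Fin n))
      (FreeLieAlgebra ℝ (Fin n)) := fun p => Sym2.lift ⟨f', hf'symm⟩ p.1
  let ψ : FreeLieAlgebra ℝ (DKPairs n) →ₗ⁅ℝ⁆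
      LieDerivation ℝ (FreeLieAlgebra ℝ (Fin n)) (FreeLieAlgebra ℝ (Fin n)) :=
    FreeLieAlgebra.lift ℝ F
  have hψ : ∀ (a b : Fin n) (hab : a ≠ b), ψ (dkGen a b hab) = D a b := by
    intro a b hab
    show FreeLieAlgebra.lift ℝ F (FreeLieAlgebra.of ℝ _) = D a b
    refine (FreeLieAlgebra.lift_of_apply (R := ℝ) F _).trans ?_
    show Sym2.lift ⟨f', hf'symm⟩ s(a, b) = D a b
    simp [f', hab]
  -- the ideal is contained in the kernel of ψ
  have hker : dkIdeal n ≤ ψ.ker := by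
    rw [dkIdeal, LieSubmodule.lieSpan_le]
    rintro x (⟨a, b, c, d, hab, hcd, hac, had, hbc, hbd, rfl⟩ |
      ⟨a, b, c, hab, hac, hbc, rfl⟩)
    · rw [SetLike.mem_coe, LieHom.mem_ker, LieHom.map_lie, hψ a b hab, hψ c d hcd]
      exact rel1 a b c d hab hcd hac had hbc hbd
    · rw [SetLike.mem_coe, LieHom.mem_ker, LieHom.map_lie, map_add,
        hψ a b hab, hψ a c hac, hψ b c hbc]
      exact rel2 a b c hab hac hbc
  -- descend to the quotient
  have hker' : (dkIdeal n).toSubmodule ≤ LinearMap.ker ψ.toLinearMap := by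
    intro x hx
    exact LieHom.mem_ker.mp (hker hx)
  refine ⟨{ Submodule.liftQ (dkIdeal n).toSubmodule ψ.toLinearMap hker' with
    map_lie' := ?_ }, ?_⟩
  · rintro ⟨x⟩ ⟨y⟩
    show ψ ⁅x, y⁆ = ⁅ψ x, ψ y⁆
    exact ψ.map_lie x y
  · intro a b hab
    show ψ (dkGen a b hab) = D a b
    exact hψ a b hab
end
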